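/- Let κ ∈ ℝ, let M be the 3×3 real matrix with rows (0, 1, 0), (1, κ², −2κ), (0, κ, −1), and let L ≥ 1 be a natural number. Then M^L equals the 3×3 identity matrix if and only if there exists a natural number k with 1 ≤ k ≤ L−1 such that κ = 2·cos(k·π/L). -/

import Mathlib

open Real

private lemma matpow_formula (c : ℝ) (A B : ℕ → ℝ) (hA0 : A 0 = 1) (hB0 : B 0 = 0)
    (hA : ∀ n, A (n + 1) = (2 * c ^ 2 - 1) * A n - 2 * c * B n)
    (hB : ∀ n, B (n + 1) = (2 * c ^ 2 - 1) * B n + 2 * c * (1 - c ^ 2) * A n) :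
    ∀ n : ℕ, (1 - c ^ 2) • (!![(0 : ℝ), 1, 0; 1, (2 * c) ^ 2, -2 * (2 * c); 0, 2 * c, -1]) ^ n =
      !![1/2 + A n * (1/2 - c ^ 2) + B n * (-c), 1/2 + A n * (-(1/2)), -c + A n * c + B n;
         1/2 + A n * (-(1/2)), 1/2 + A n * (1/2 - c ^ 2) + B n * c, -c + A n * c - B n;
         c/2 + A n * (-(c/2)) + B n * (-(1/2)), c/2 + A n * (-(c/2)) + B n * (1/2),
           -c ^ 2 + A n] := by
  intro n
  induction n with
  | zero =>
    rw [pow_zero, hA0, hB0, Matrix.one_fin_three]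
    ext i j
    fin_cases i <;> fin_cases j <;>
      simp [Matrix.smul_apply, Matrix.vecHead, Matrix.vecTail] <;> ring
  | succ n ih =>
    rw [pow_succ (!![(0 : ℝ), 1, 0; 1, (2 * c) ^ 2, -2 * (2 * c); 0, 2 * c, -1]) n,
      ← Matrix.smul_mul, ih]
    ext i j
    fin_cases i <;> fin_cases j <;>
      simp [Matrix.mul_apply, Fin.sum_univ_three, hA, hB, Matrix.vecHead, Matrix.vecTail] <;>
        ring

private lemma trig_formula (θ : ℝ) (n : ℕ) :
    (1 - Real.cos θ ^ 2) •
        (!![(0 : ℝ), 1, 0; 1, (2 * Real.cos θ) ^ 2, -2 * (2 * Real.cos θ);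
            0, 2 * Real.cos θ, -1]) ^ n =
      !![1/2 + Real.cos (2 * n * θ) * (1/2 - Real.cos θ ^ 2) +
            Real.sin (2 * n * θ) * Real.sin θ * (-Real.cos θ),
         1/2 + Real.cos (2 * n * θ) * (-(1/2)),
         -Real.cos θ + Real.cos (2 * n * θ) * Real.cos θ + Real.sin (2 * n * θ) * Real.sin θ;
         1/2 + Real.cos (2 * n * θ) * (-(1/2)),
         1/2 + Real.cos (2 * n * θ) * (1/2 - Real.cos θ ^ 2) +
            Real.sin (2 * n * θ) * Real.sin θ * Real.cos θ,
         -Real.cos θ + Real.cos (2 * n * θ) * Real.cos θ - Real.sin (2 * n * θ) * Real.sin θ;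
         Real.cos θ / 2 + Real.cos (2 * n * θ) * (-(Real.cos θ / 2)) +
            Real.sin (2 * n * θ) * Real.sin θ * (-(1/2)),
         Real.cos θ / 2 + Real.cos (2 * n * θ) * (-(Real.cos θ / 2)) +
            Real.sin (2 * n * θ) * Real.sin θ * (1/2),
         -Real.cos θ ^ 2 + Real.cos (2 * n * θ)] := by
  refine matpow_formula (Real.cos θ)
    (fun m => Real.cos (2 * m * θ)) (fun m => Real.sin (2 * m * θ) * Real.sin θ)
    (by norm_num) (by norm_num) ?_ ?_ n
  · intro m
    simp only [Nat.cast_add, Nat.cast_one]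
    have harg : (2 * ((m : ℝ) + 1) * θ) = 2 * m * θ + 2 * θ := by ring
    rw [harg, Real.cos_add, Real.cos_two_mul, Real.sin_two_mul]
    ring
  · intro m
    simp only [Nat.cast_add, Nat.cast_one]
    have harg : (2 * ((m : ℝ) + 1) * θ) = 2 * m * θ + 2 * θ := by ring
    rw [harg, Real.sin_add, Real.cos_two_mul, Real.sin_two_mul]
    have hs := Real.sin_sq_add_cos_sq θ
    linear_combination (2 * Real.cos θ * Real.cos (2 * (m : ℝ) * θ)) * hs

private lemma matpow_deg (e : ℝ) (he : e = 1 ∨ e = -1) :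
    ∀ n : ℕ, (!![(0 : ℝ), 1, 0; 1, (2 * e) ^ 2, -2 * (2 * e); 0, 2 * e, -1]) ^ n =
      !![1 - (n : ℝ) + (n : ℝ) * ((n : ℝ) - 1), (n : ℝ) + (n : ℝ) * ((n : ℝ) - 1),
           -2 * e * ((n : ℝ) * ((n : ℝ) - 1));
         (n : ℝ) + (n : ℝ) * ((n : ℝ) - 1), 1 + 3 * (n : ℝ) + (n : ℝ) * ((n : ℝ) - 1),
           -4 * e * (n : ℝ) - 2 * e * ((n : ℝ) * ((n : ℝ) - 1));
         e * ((n : ℝ) * ((n : ℝ) - 1)), 2 * e * (n : ℝ) + e * ((n : ℝ) * ((n : ℝ) - 1)),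
           1 - 2 * (n : ℝ) - 2 * ((n : ℝ) * ((n : ℝ) - 1))] := by
  intro n
  induction n with
  | zero =>
    rw [pow_zero, Matrix.one_fin_three]
    ext i j
    fin_cases i <;> fin_cases j <;> simp [Matrix.vecHead, Matrix.vecTail]
  | succ n ih =>
    rw [pow_succ (!![(0 : ℝ), 1, 0; 1, (2 * e) ^ 2, -2 * (2 * e); 0, 2 * e, -1]) n, ih]
    ext i j
    fin_cases i <;> fin_cases j <;>
      simp [Matrix.mul_apply, Fin.sum_univ_three, Matrix.vecHead, Matrix.vecTail] <;>
        push_cast <;> rcases he with rfl | rfl <;> ring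

set_option maxHeartbeats 1600000 in
theorem periodicity_classification (κ : ℝ) (L : ℕ) (hL : 1 ≤ L) :
    (!![(0 : ℝ), 1, 0; 1, κ ^ 2, -2 * κ; 0, κ, -1]) ^ L = 1 ↔
      ∃ k : ℕ, 1 ≤ k ∧ k ≤ L - 1 ∧ κ = 2 * Real.cos (k * Real.pi / L) := by
  have hLpos : (0 : ℝ) < L := by exact_mod_cast hL
  have hπ := Real.pi_pos
  constructor
  · intro h
    rcases lt_trichotomy (κ ^ 2) 4 with hlt | heq | hgt
    · -- |κ| < 2 : trig case
      have hb1 : -1 ≤ κ / 2 := by nlinarith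
      have hb2 : κ / 2 ≤ 1 := by nlinarith
      set θ := Real.arccos (κ / 2) with hθdef
      have hc : Real.cos θ = κ / 2 := Real.cos_arccos hb1 hb2
      have hθ0 : 0 < θ := Real.arccos_pos.mpr (by nlinarith)
      have hθπ : θ < π := by
        refine lt_of_le_of_ne (Real.arccos_le_pi _) fun hpe => ?_
        have := Real.arccos_eq_pi.mp hpe
        nlinarith
      have hκc : κ = 2 * Real.cos θ := by rw [hc]; ring
      rw [hκc] at h
      have key := trig_formula θ L
      rw [h] at key
      have e01 := congrFun (congrFun key 0) 1
      simp [Matrix.one_apply] at e01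
      have hcos1 : Real.cos (2 * L * θ) = 1 := by linarith
      obtain ⟨m, hm⟩ := (Real.cos_eq_one_iff _).mp hcos1
      have hm0 : (0 : ℤ) < m := by
        by_contra hle
        push_neg at hle
        have : (m : ℝ) ≤ 0 := by exact_mod_cast hle
        nlinarith
      have hmL : m < (L : ℤ) := by
        by_contra hge
        push_neg at hge
        have : (L : ℝ) ≤ (m : ℝ) := by exact_mod_cast hge
        nlinarith
      refine ⟨m.toNat, ?_, ?_, ?_⟩
      · omega
      · omega
      · have hmr : ((m.toNat : ℕ) : ℝ) = (m : ℝ) := by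
          exact_mod_cast Int.toNat_of_nonneg hm0.le
        have hθeq : θ = (m.toNat : ℝ) * π / L := by
          rw [hmr]
          field_simp
          nlinarith [hm]
        rw [hκc, hθeq]
    · -- κ² = 4 : degenerate case
      exfalso
      have hL1 : (1 : ℝ) ≤ (L : ℝ) := by exact_mod_cast hL
      have hcase : κ = 2 ∨ κ = -2 := by
        have h4 : (κ - 2) * (κ + 2) = 0 := by nlinarith
        rcases mul_eq_zero.mp h4 with h' | h'
        · left; linarith
        · right; linarith
      rcases hcase with rfl | rfl
      · have hmeq : (!![(0 : ℝ), 1, 0; 1, (2 : ℝ) ^ 2, -2 * 2; 0, 2, -1]) =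
            !![(0 : ℝ), 1, 0; 1, (2 * (1 : ℝ)) ^ 2, -2 * (2 * 1); 0, 2 * 1, -1] := by norm_num
        rw [hmeq] at h
        have key := matpow_deg 1 (Or.inl rfl) L
        rw [h] at key
        have e01 := congrFun (congrFun key 0) 1
        simp [Matrix.one_apply, Matrix.vecHead, Matrix.vecTail] at e01
        nlinarith [e01, hL1]
      · have hmeq : (!![(0 : ℝ), 1, 0; 1, (-2 : ℝ) ^ 2, -2 * (-2); 0, -2, -1]) =
            !![(0 : ℝ), 1, 0; 1, (2 * (-1 : ℝ)) ^ 2, -2 * (2 * (-1)); 0, 2 * (-1), -1] := by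
          norm_num
        rw [hmeq] at h
        have key := matpow_deg (-1) (Or.inr rfl) L
        rw [h] at key
        have e01 := congrFun (congrFun key 0) 1
        simp [Matrix.one_apply, Matrix.vecHead, Matrix.vecTail] at e01
        nlinarith [e01, hL1]
    · -- κ² > 4 : hyperbolic case
      exfalso
      set c := κ / 2 with hcdef
      have hc2 : 1 < c ^ 2 := by
        rw [hcdef]; nlinarith
      set F : ℕ → ℝ × ℝ := fun n =>
        Nat.rec ((1 : ℝ), (0 : ℝ))
          (fun _ p => ((2 * c ^ 2 - 1) * p.1 - 2 * c * p.2,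
            (2 * c ^ 2 - 1) * p.2 + 2 * c * (1 - c ^ 2) * p.1)) n with hF
      have hA : ∀ n, (F (n + 1)).1 = (2 * c ^ 2 - 1) * (F n).1 - 2 * c * (F n).2 := fun n => rfl
      have hB : ∀ n, (F (n + 1)).2 =
          (2 * c ^ 2 - 1) * (F n).2 + 2 * c * (1 - c ^ 2) * (F n).1 := fun n => rfl
      have inv : ∀ n, 1 ≤ (F n).1 ∧ c * (F n).2 ≤ 0 := by
        intro n
        induction n with
        | zero => exact ⟨le_refl 1, by simp [hF]⟩
        | succ n ih =>
          have t3 : (2 * c ^ 2 - 1) * 1 ≤ (2 * c ^ 2 - 1) * (F n).1 :=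
            mul_le_mul_of_nonneg_left ih.1 (by nlinarith)
          constructor
          · rw [hA]; nlinarith [t3, ih.2, hc2]
          · rw [hB]
            have hrw : c * ((2 * c ^ 2 - 1) * (F n).2 + 2 * c * (1 - c ^ 2) * (F n).1) =
                (2 * c ^ 2 - 1) * (c * (F n).2) + (2 * c ^ 2 * (1 - c ^ 2)) * (F n).1 := by ring
            rw [hrw]
            have t1 : (2 * c ^ 2 - 1) * (c * (F n).2) ≤ 0 :=
              mul_nonpos_of_nonneg_of_nonpos (by nlinarith) ih.2
            have t2 : (2 * c ^ 2 * (1 - c ^ 2)) * (F n).1 ≤ 0 :=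
              mul_nonpos_of_nonpos_of_nonneg (by nlinarith) (by linarith [ih.1])
            linarith
      have hκc : κ = 2 * c := by rw [hcdef]; ring
      have hκ2 : κ ^ 2 = (2 * c) ^ 2 := by rw [hκc]
      rw [hκ2, hκc] at h
      have key := matpow_formula c (fun n => (F n).1) (fun n => (F n).2) rfl rfl hA hB L
      rw [h] at key
      have e01 := congrFun (congrFun key 0) 1
      simp [Matrix.one_apply] at e01
      have hFL : (F L).1 = 1 := by linarith
      obtain ⟨m, rfl⟩ := Nat.exists_eq_add_of_le hL
      have hAL : 1 ≤ (F m).1 := (inv m).1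
      have hBL : c * (F m).2 ≤ 0 := (inv m).2
      have hstep := hA m
      have hcomm : (F (1 + m)).1 = (F (m + 1)).1 := by rw [Nat.add_comm]
      have t3 : (2 * c ^ 2 - 1) * 1 ≤ (2 * c ^ 2 - 1) * (F m).1 :=
        mul_le_mul_of_nonneg_left hAL (by nlinarith)
      nlinarith [hcomm, hstep, t3, hBL, hc2, hFL]
  · rintro ⟨k, hk1, hk2, hκ⟩
    have hL2 : 2 ≤ L := by omega
    set θ := (k : ℝ) * π / L with hθdef
    have hkL : (k : ℝ) < L := by
      have : k < L := by omega
      exact_mod_cast this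
    have hk1' : (1 : ℝ) ≤ (k : ℝ) := by exact_mod_cast hk1
    have hθ0 : 0 < θ := by
      rw [hθdef]
      positivity
    have hθπ : θ < π := by
      rw [hθdef, div_lt_iff₀ hLpos]
      nlinarith
    have hsin : 0 < Real.sin θ := Real.sin_pos_of_pos_of_lt_pi hθ0 hθπ
    have hne : (1 : ℝ) - Real.cos θ ^ 2 ≠ 0 := by
      have := Real.sin_sq_add_cos_sq θ
      nlinarith
    rw [hκ]
    have key := trig_formula θ L
    have harg : 2 * (L : ℝ) * θ = (k : ℝ) * (2 * π) := by
      rw [hθdef]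
      field_simp
    have hcosL : Real.cos (2 * (L : ℝ) * θ) = 1 := by
      rw [harg]; exact Real.cos_nat_mul_two_pi k
    have hsinL : Real.sin (2 * (L : ℝ) * θ) = 0 := by
      rw [harg]
      have h2k : (k : ℝ) * (2 * π) = ((2 * k : ℕ) : ℝ) * π := by push_cast; ring
      rw [h2k]; exact Real.sin_nat_mul_pi (2 * k)
    rw [hcosL, hsinL] at key
    have hid : (!![1/2 + 1 * (1/2 - Real.cos θ ^ 2) + 0 * Real.sin θ * (-Real.cos θ),
         1/2 + 1 * (-(1/2)),
         -Real.cos θ + 1 * Real.cos θ + 0 * Real.sin θ;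
         1/2 + 1 * (-(1/2)),
         1/2 + 1 * (1/2 - Real.cos θ ^ 2) + 0 * Real.sin θ * Real.cos θ,
         -Real.cos θ + 1 * Real.cos θ - 0 * Real.sin θ;
         Real.cos θ / 2 + 1 * (-(Real.cos θ / 2)) + 0 * Real.sin θ * (-(1/2)),
         Real.cos θ / 2 + 1 * (-(Real.cos θ / 2)) + 0 * Real.sin θ * (1/2),
         -Real.cos θ ^ 2 + 1] : Matrix (Fin 3) (Fin 3) ℝ) =
        (1 - Real.cos θ ^ 2) • (1 : Matrix (Fin 3) (Fin 3) ℝ) := by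
      rw [Matrix.one_fin_three]
      ext i j
      fin_cases i <;> fin_cases j <;>
        simp [Matrix.smul_apply, Matrix.vecHead, Matrix.vecTail] <;> ring
    rw [hid] at key
    exact smul_right_injective (Matrix (Fin 3) (Fin 3) ℝ) hne key
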